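/- Let M be a locally compact Hausdorff space, let U ⊆ M be open, let φ : U → ℝ^m be a homeomorphism, let Z ⊆ ℝ^m be a compact set, and let ℏ > 0. Then the quotient space of M obtained by collapsing the compact set φ⁻¹((ℏ·Z) ∪ {0}) to a single point is homeomorphic to the quotient space of M obtained by collapsing φ⁻¹(Z ∪ {0}) to a single point. Here ℏ·Z = {ℏ·z : z ∈ Z}. -/

import Mathlib

open scoped Pointwise

/-- The quotient of a topological space obtained by collapsing the subset `Y`
to a single point, with the quotient topology. -/
abbrev Collapse {M : Type*} [TopologicalSpace M] (Y : Set M) : Type _ :=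
  Quot (fun x y : M => x = y ∨ (x ∈ Y ∧ y ∈ Y))

/-! ### Auxiliary: collapse is functorial under homeomorphisms respecting the subsets -/

open Topology in
def collapseCongr {M N : Type*} [TopologicalSpace M] [TopologicalSpace N]
    (e : M ≃ₜ N) (Y₁ : Set M) (Y₂ : Set N) (hY : ∀ x, x ∈ Y₁ ↔ e x ∈ Y₂) :
    Collapse Y₁ ≃ₜ Collapse Y₂ where
  toFun := Quot.map e (fun x y h => h.imp (congrArg e)
    (fun h => ⟨(hY x).1 h.1, (hY y).1 h.2⟩))
  invFun := Quot.map e.symm (fun x y h => h.imp (congrArg e.symm)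
    (fun h => ⟨(hY _).2 (by simpa using h.1), (hY _).2 (by simpa using h.2)⟩))
  left_inv := by rintro ⟨x⟩; exact congrArg (Quot.mk _) (e.symm_apply_apply x)
  right_inv := by rintro ⟨x⟩; exact congrArg (Quot.mk _) (e.apply_symm_apply x)
  continuous_toFun := isQuotientMap_quot_mk.continuous_iff.mpr
    (continuous_quot_mk.comp e.continuous)
  continuous_invFun := isQuotientMap_quot_mk.continuous_iff.mpr
    (continuous_quot_mk.comp e.symm.continuous)

/-! ### Auxiliary: a piecewise-linear rescaling of `ℝ` -/

section Rho
variable (ℏ a : ℝ)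

noncomputable def rho (r : ℝ) : ℝ :=
  if r ≤ a then r / ℏ
  else if r ≤ max a (a / ℏ) + 1 then
    a / ℏ + (r - a) * ((max a (a / ℏ) + 1 - a / ℏ) / (max a (a / ℏ) + 1 - a))
  else r

variable {ℏ a} (hℏ : 0 < ℏ) (ha : 0 < a)
include hℏ ha

set_option linter.unusedSectionVars false

lemma rho_strictMono : StrictMono (rho ℏ a) := by
  set c := a / ℏ with hc
  set b := max a c + 1 with hb
  have hba : a < b := by have := le_max_left a c; linarith
  have hbc : c < b := by have := le_max_right a c; linarith
  have hk : 0 < (b - c) / (b - a) := by apply div_pos <;> linarith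
  have key : (b - a) * ((b - c) / (b - a)) = b - c := by
    rw [mul_div_cancel₀]; linarith
  intro r s hrs
  unfold rho
  rw [← hc, ← hb]
  rcases le_or_gt r a with h1 | h1 <;> rcases le_or_gt s a with h2 | h2
  · rw [if_pos h1, if_pos h2]; gcongr
  · rw [if_pos h1, if_neg (not_le.2 h2)]
    have hra : r / ℏ ≤ c := by rw [hc]; gcongr
    split_ifs with h3
    · nlinarith [mul_pos (by linarith : (0:ℝ) < s - a) hk]
    · linarith
  · linarith
  · rw [if_neg (not_le.2 h1), if_neg (not_le.2 h2)]
    split_ifs with h3 h4 h4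
    · have := mul_lt_mul_of_pos_right (by linarith : r - a < s - a) hk
      linarith
    · nlinarith [mul_le_mul_of_nonneg_right (by linarith : r - a ≤ b - a) hk.le]
    · linarith
    · exact hrs

lemma rho_surjective : Function.Surjective (rho ℏ a) := by
  set c := a / ℏ with hc
  set b := max a c + 1 with hb
  have hba : a < b := by have := le_max_left a c; linarith
  have hbc : c < b := by have := le_max_right a c; linarith
  have hk : 0 < (b - c) / (b - a) := by apply div_pos <;> linarith
  intro y
  rcases le_or_gt y c with hy | hy
  · exact ⟨ℏ * y, by
      have h1 : ℏ * y ≤ a := by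
        rw [hc] at hy
        calc ℏ * y ≤ ℏ * (a / ℏ) := by gcongr
        _ = a := by field_simp
      simp only [rho, ← hc, ← hb, if_pos h1]
      field_simp⟩
  rcases le_or_gt y b with hy2 | hy2
  · refine ⟨a + (y - c) / ((b - c) / (b - a)), ?_⟩
    have h1 : ¬ (a + (y - c) / ((b - c) / (b - a)) ≤ a) := by
      have : 0 < (y - c) / ((b - c) / (b - a)) := by apply div_pos <;> linarith
      linarith
    have h2 : a + (y - c) / ((b - c) / (b - a)) ≤ b := by
      have : (y - c) / ((b - c) / (b - a)) ≤ b - a := by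
        rw [div_le_iff₀ hk]
        have h3 : (b - a) * ((b - c) / (b - a)) = b - c := by
          rw [mul_div_cancel₀]; linarith
        linarith
      linarith
    simp only [rho, ← hc, ← hb, if_neg h1, if_pos h2]
    rw [add_sub_cancel_left, div_mul_cancel₀ _ (ne_of_gt hk)]
    ring
  · refine ⟨y, ?_⟩
    have h1 : ¬ (y ≤ a) := not_le.2 (by linarith)
    have h2 : ¬ (y ≤ max a (a / ℏ) + 1) := not_le.2 (by rw [← hc, ← hb]; linarith)
    simp only [rho, if_neg h1, if_neg h2]

lemma rho_small {r : ℝ} (hr : r ≤ a) : rho ℏ a r = ℏ⁻¹ * r := by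
  simp only [rho, if_pos hr]; field_simp

lemma rho_big {r : ℝ} (hr : max a (a / ℏ) + 1 ≤ r) : rho ℏ a r = r := by
  have hba : a < max a (a / ℏ) + 1 := by have := le_max_left a (a/ℏ); linarith
  have hne : max a (a / ℏ) + 1 - a ≠ 0 := sub_ne_zero.2 hba.ne'
  rcases eq_or_lt_of_le hr with h | h
  · rw [← h]
    simp only [rho, if_neg (not_le.2 hba), if_pos le_rfl]
    field_simp
    ring
  · have h1 : ¬ (r ≤ a) := not_le.2 (by linarith)
    have h2 : ¬ (r ≤ max a (a / ℏ) + 1) := not_le.2 h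
    simp only [rho, if_neg h1, if_neg h2]

end Rho

/-! ### Auxiliary: radial homeomorphisms of a normed space -/

section Radial
variable {E : Type*} [NormedAddCommGroup E] [NormedSpace ℝ E]

noncomputable def radial (e : ℝ → ℝ) (x : E) : E := (e ‖x‖ / ‖x‖) • x

lemma radial_eq_smul (e : ℝ → ℝ) (d : ℝ) {a : ℝ}
    (hd : ∀ r ≤ a, e r = d * r) {x : E} (hx : ‖x‖ ≤ a) : radial e x = d • x := by
  rcases eq_or_ne x 0 with rfl | hx0
  · simp [radial]
  · have hn : ‖x‖ ≠ 0 := norm_ne_zero_iff.2 hx0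
    rw [radial, hd _ hx, mul_div_assoc, div_self hn, mul_one]

lemma radial_big (e : ℝ → ℝ) {b : ℝ} (hb : ∀ r, b ≤ r → e r = r) {x : E}
    (hx : b ≤ ‖x‖) : radial e x = x := by
  rcases eq_or_ne x 0 with rfl | hx0
  · simp [radial]
  · rw [radial, hb _ hx, div_self (norm_ne_zero_iff.2 hx0), one_smul]

lemma radial_zero (e : ℝ → ℝ) : radial e (0 : E) = 0 := by simp [radial]

lemma norm_radial (e : ℝ → ℝ) (h0 : e 0 = 0) (hmono : Monotone e) (x : E) :
    ‖radial e x‖ = e ‖x‖ := by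
  rcases eq_or_ne x 0 with rfl | hx0
  · simp [radial, h0]
  · have hn : ‖x‖ ≠ 0 := norm_ne_zero_iff.2 hx0
    have he : 0 ≤ e ‖x‖ := h0 ▸ hmono (norm_nonneg x)
    rw [radial, norm_smul, Real.norm_eq_abs, abs_of_nonneg (div_nonneg he (norm_nonneg x)),
      div_mul_cancel₀ _ hn]

lemma radial_continuous (e : ℝ → ℝ) (he : Continuous e) (d : ℝ) {a : ℝ} (ha : 0 < a)
    (hd : ∀ r ≤ a, e r = d * r) : Continuous (radial (E := E) e) := by
  rw [continuous_iff_continuousAt]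
  intro x
  rcases eq_or_ne x 0 with rfl | hx0
  · refine ((continuous_const_smul d).continuousAt (x := (0:E))).congr ?_
    filter_upwards [Metric.ball_mem_nhds (0:E) ha] with y hy
    exact (radial_eq_smul e d hd (le_of_lt (by simpa using hy))).symm
  · exact ((((he.continuousAt.comp continuous_norm.continuousAt).div
      continuous_norm.continuousAt (norm_ne_zero_iff.2 hx0))).smul continuousAt_id)

lemma radial_left_inv (e : ℝ ≃o ℝ) (h0 : e 0 = 0) (x : E) :
    radial ⇑e.symm (radial ⇑e x) = x := by
  rcases eq_or_ne x 0 with rfl | hx0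
  · rw [radial_zero, radial_zero]
  · have hn : ‖x‖ ≠ 0 := norm_ne_zero_iff.2 hx0
    have hpos : 0 < e ‖x‖ := by
      rw [← h0]
      exact e.strictMono ((norm_pos_iff.2 hx0))
    rw [radial, norm_radial ⇑e h0 e.monotone, e.symm_apply_apply, radial, smul_smul]
    rw [div_mul_div_comm, mul_comm, div_self (by positivity), one_smul]

noncomputable def radialHomeo (e : ℝ ≃o ℝ) (d d' : ℝ) {a a' : ℝ} (ha : 0 < a) (ha' : 0 < a')
    (hd : ∀ r ≤ a, e r = d * r) (hd' : ∀ r ≤ a', e.symm r = d' * r) : E ≃ₜ E where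
  toFun := radial ⇑e
  invFun := radial ⇑e.symm
  left_inv := radial_left_inv e (by rw [hd 0 ha.le, mul_zero])
  right_inv := by
    have := radial_left_inv (E := E) e.symm (by rw [hd' 0 ha'.le, mul_zero])
    exact fun x => by simpa using this x
  continuous_toFun := radial_continuous ⇑e (e.toHomeomorph.continuous) d ha hd
  continuous_invFun := radial_continuous ⇑e.symm (e.symm.toHomeomorph.continuous) d' ha' hd'

end Radial

/-! ### Auxiliary: extending a compactly-supported homeomorphism of a chart to the whole space -/

section Extend
variable {M : Type*} [TopologicalSpace M] [T2Space M] {m : ℕ}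

set_option linter.unusedSectionVars false

open scoped Classical in
noncomputable def extFun (U : Set M) (φ : U ≃ₜ EuclideanSpace ℝ (Fin m))
    (H : EuclideanSpace ℝ (Fin m) → EuclideanSpace ℝ (Fin m)) (x : M) : M :=
  if hx : x ∈ U then ↑(φ.symm (H (φ ⟨x, hx⟩))) else x

lemma extFun_coe (U : Set M) (φ : U ≃ₜ EuclideanSpace ℝ (Fin m))
    (H : EuclideanSpace ℝ (Fin m) → EuclideanSpace ℝ (Fin m)) (u : U) :
    extFun U φ H ↑u = ↑(φ.symm (H (φ u))) := by
  simp only [extFun, dif_pos u.2, Subtype.coe_eta]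

lemma extFun_not_mem (U : Set M) (φ : U ≃ₜ EuclideanSpace ℝ (Fin m))
    (H : EuclideanSpace ℝ (Fin m) → EuclideanSpace ℝ (Fin m)) {x : M} (hx : x ∉ U) :
    extFun U φ H x = x := by simp only [extFun, dif_neg hx]

lemma extFun_continuous (U : Set M) (hU : IsOpen U) (φ : U ≃ₜ EuclideanSpace ℝ (Fin m))
    (H : EuclideanSpace ℝ (Fin m) → EuclideanSpace ℝ (Fin m)) (hHc : Continuous H) (b : ℝ)
    (hH : ∀ x : EuclideanSpace ℝ (Fin m), b ≤ ‖x‖ → H x = x) :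
    Continuous (extFun U φ H) := by
  have hrestrict : Continuous (fun u : U => extFun U φ H ↑u) := by
    simp only [extFun_coe]
    exact continuous_subtype_val.comp (φ.symm.continuous.comp (hHc.comp φ.continuous))
  have hcont_on : ContinuousOn (extFun U φ H) U :=
    continuousOn_iff_continuous_restrict.2 hrestrict
  rw [continuous_iff_continuousAt]
  intro x
  by_cases hx : x ∈ U
  · exact hcont_on.continuousAt (hU.mem_nhds hx)
  · set K : Set M := Subtype.val '' (⇑φ.symm '' Metric.closedBall 0 b) with hK
    have hKc : IsCompact K :=
      (((isCompact_closedBall (0:EuclideanSpace ℝ (Fin m)) b).image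
        φ.symm.continuous).image continuous_subtype_val)
    have hKU : K ⊆ U := by
      rintro _ ⟨u, -, rfl⟩; exact u.2
    have hV : IsOpen (Kᶜ) := hKc.isClosed.isOpen_compl
    have hxV : x ∈ Kᶜ := fun h => hx (hKU h)
    have heq : Set.EqOn (extFun U φ H) id Kᶜ := by
      intro y hy
      by_cases hyU : y ∈ U
      · have hball : φ ⟨y, hyU⟩ ∉ Metric.closedBall (0:EuclideanSpace ℝ (Fin m)) b := by
          intro hmem
          exact hy ⟨⟨y, hyU⟩, ⟨φ ⟨y, hyU⟩, hmem, φ.symm_apply_apply _⟩, rfl⟩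
        have hnorm : b ≤ ‖φ ⟨y, hyU⟩‖ := by
          by_contra hlt
          exact hball (by simpa [Metric.mem_closedBall, dist_zero_right] using (not_le.1 hlt).le)
        simp only [extFun, dif_pos hyU, hH _ hnorm, φ.symm_apply_apply, id]
      · simp only [extFun, dif_neg hyU, id]
    exact continuousAt_id.congr (Filter.eventuallyEq_of_mem (hV.mem_nhds hxV)
      fun y hy => (heq hy).symm)

noncomputable def extendHomeo (U : Set M) (hU : IsOpen U) (φ : U ≃ₜ EuclideanSpace ℝ (Fin m))
    (H : EuclideanSpace ℝ (Fin m) ≃ₜ EuclideanSpace ℝ (Fin m)) (b : ℝ)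
    (hH : ∀ x : EuclideanSpace ℝ (Fin m), b ≤ ‖x‖ → H x = x)
    (hHs : ∀ x : EuclideanSpace ℝ (Fin m), b ≤ ‖x‖ → H.symm x = x) :
    M ≃ₜ M where
  toFun := extFun U φ ⇑H
  invFun := extFun U φ ⇑H.symm
  left_inv := by
    intro x
    by_cases hx : x ∈ U
    · rw [show x = ↑(⟨x, hx⟩ : U) from rfl, extFun_coe, extFun_coe, φ.apply_symm_apply,
        H.symm_apply_apply, φ.symm_apply_apply]
    · rw [extFun_not_mem U φ _ hx, extFun_not_mem U φ _ hx]
  right_inv := by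
    intro x
    by_cases hx : x ∈ U
    · rw [show x = ↑(⟨x, hx⟩ : U) from rfl, extFun_coe, extFun_coe, φ.apply_symm_apply,
        H.apply_symm_apply, φ.symm_apply_apply]
    · rw [extFun_not_mem U φ _ hx, extFun_not_mem U φ _ hx]
  continuous_toFun := extFun_continuous U hU φ ⇑H H.continuous b hH
  continuous_invFun := extFun_continuous U hU φ ⇑H.symm H.symm.continuous b hHs

end Extend

theorem collapse_scaled_set_homeomorphic
    {M : Type*} [TopologicalSpace M] [LocallyCompactSpace M] [T2Space M]
    {m : ℕ} (U : Set M) (hU : IsOpen U) (φ : U ≃ₜ EuclideanSpace ℝ (Fin m))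
    (Z : Set (EuclideanSpace ℝ (Fin m))) (hZ : IsCompact Z) (ℏ : ℝ) (hℏ : 0 < ℏ) :
    Nonempty
      (Collapse (Subtype.val '' (⇑φ ⁻¹' (ℏ • Z ∪ {0}))) ≃ₜ
       Collapse (Subtype.val '' (⇑φ ⁻¹' (Z ∪ {0})))) := by
  classical
  obtain ⟨R, hR⟩ := hZ.isBounded.subset_closedBall 0
  set R0 : ℝ := max R 0 with hR0
  have hZR : ∀ z ∈ Z, ‖z‖ ≤ R0 := by
    intro z hz
    have := hR hz
    rw [Metric.mem_closedBall, dist_zero_right] at this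
    exact this.trans (le_max_left _ _)
  set a : ℝ := ℏ * (R0 + 1) with ha_def
  have hR0' : 0 ≤ R0 := le_max_right _ _
  have ha : 0 < a := by positivity
  have hc : 0 < a / ℏ := by positivity
  have hca : a / ℏ = R0 + 1 := by
    rw [ha_def, mul_div_assoc]
    field_simp
  set e : ℝ ≃o ℝ := StrictMono.orderIsoOfSurjective _
    (rho_strictMono hℏ ha) (rho_surjective hℏ ha) with he_def
  have hecoe : ∀ r, e r = rho ℏ a r := fun r => rfl
  have hd : ∀ r ≤ a, e r = ℏ⁻¹ * r := fun r hr => (hecoe r).trans (rho_small hℏ ha hr)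
  have hd' : ∀ r ≤ a / ℏ, e.symm r = ℏ * r := by
    intro r hr
    have h1 : ℏ * r ≤ a := by
      calc ℏ * r ≤ ℏ * (a / ℏ) := by gcongr
      _ = a := by field_simp
    have h2 : e (ℏ * r) = r := by
      rw [hd _ h1, ← mul_assoc, inv_mul_cancel₀ hℏ.ne', one_mul]
    calc e.symm r = e.symm (e (ℏ * r)) := by rw [h2]
    _ = ℏ * r := e.symm_apply_apply _
  set b : ℝ := max a (a / ℏ) + 1 with hb_def
  have hbig : ∀ r, b ≤ r → e r = r := fun r hr => (hecoe r).trans (rho_big hℏ ha hr)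
  have hbig' : ∀ r, b ≤ r → e.symm r = r := by
    intro r hr
    calc e.symm r = e.symm (e r) := by rw [hbig r hr]
    _ = r := e.symm_apply_apply r
  set H : EuclideanSpace ℝ (Fin m) ≃ₜ EuclideanSpace ℝ (Fin m) :=
    radialHomeo e ℏ⁻¹ ℏ ha hc hd hd' with hH_def
  have hH : ∀ x : EuclideanSpace ℝ (Fin m), b ≤ ‖x‖ → H x = x :=
    fun x hx => radial_big ⇑e hbig hx
  have hHs : ∀ x : EuclideanSpace ℝ (Fin m), b ≤ ‖x‖ → H.symm x = x :=
    fun x hx => radial_big ⇑e.symm hbig' hx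
  have hHsmall : ∀ x : EuclideanSpace ℝ (Fin m), ‖x‖ ≤ a → H x = ℏ⁻¹ • x :=
    fun x hx => radial_eq_smul ⇑e ℏ⁻¹ hd hx
  have hHssmall : ∀ x : EuclideanSpace ℝ (Fin m), ‖x‖ ≤ a / ℏ → H.symm x = ℏ • x :=
    fun x hx => radial_eq_smul ⇑e.symm ℏ hd' hx
  have hiffE : ∀ y : EuclideanSpace ℝ (Fin m), y ∈ ℏ • Z ∪ {0} ↔ H y ∈ Z ∪ {0} := by
    intro y
    constructor
    · rintro (hy | hy)
      · obtain ⟨z, hz, rfl⟩ := hy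
        have hnorm : ‖ℏ • z‖ ≤ a := by
          rw [norm_smul, Real.norm_eq_abs, abs_of_pos hℏ, ha_def]
          have := hZR z hz
          nlinarith
        left
        rw [hHsmall _ hnorm, smul_smul, inv_mul_cancel₀ hℏ.ne', one_smul]
        exact hz
      · rw [Set.mem_singleton_iff] at hy
        subst hy
        right
        rw [hHsmall 0 (by simpa using ha.le), smul_zero]
        rfl
    · intro hy
      have hy' : y = H.symm (H y) := (H.symm_apply_apply y).symm
      rcases hy with hz | h0
      · left
        have hnorm : ‖H y‖ ≤ a / ℏ := by
          rw [hca]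
          have := hZR _ hz
          linarith
        refine ⟨H y, hz, ?_⟩
        show ℏ • H y = y
        rw [← hHssmall _ hnorm, ← hy']
      · rw [Set.mem_singleton_iff] at h0
        right
        rw [Set.mem_singleton_iff, hy', h0, hHssmall 0 (by simpa using hc.le), smul_zero]
  set Φ : M ≃ₜ M := extendHomeo U hU φ H b hH hHs with hΦ_def
  have hΦcoe : ∀ u : U, Φ ↑u = ↑(φ.symm (H (φ u))) := fun u => extFun_coe U φ ⇑H u
  have hΦnot : ∀ x ∉ U, Φ x = x := fun x hx => extFun_not_mem U φ ⇑H hx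
  have hiffM : ∀ x : M, x ∈ Subtype.val '' (⇑φ ⁻¹' (ℏ • Z ∪ {0})) ↔
      Φ x ∈ Subtype.val '' (⇑φ ⁻¹' (Z ∪ {0})) := by
    intro x
    constructor
    · rintro ⟨u, hu, rfl⟩
      refine ⟨φ.symm (H (φ u)), ?_, (hΦcoe u).symm⟩
      show φ (φ.symm (H (φ u))) ∈ Z ∪ {0}
      rw [φ.apply_symm_apply]
      exact (hiffE _).1 hu
    · intro hmem
      by_cases hx : x ∈ U
      · obtain ⟨v, hv, hveq⟩ := hmem
        refine ⟨⟨x, hx⟩, ?_, rfl⟩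
        have h1 : Φ x = ↑(φ.symm (H (φ ⟨x, hx⟩))) := hΦcoe ⟨x, hx⟩
        have hv2 : v = φ.symm (H (φ ⟨x, hx⟩)) :=
          Subtype.val_injective (by rw [hveq, h1])
        apply (hiffE (φ ⟨x, hx⟩)).2
        show H (φ ⟨x, hx⟩) ∈ Z ∪ {0}
        rw [← φ.apply_symm_apply (H (φ ⟨x, hx⟩)), ← hv2]
        exact hv
      · obtain ⟨v, hv, hveq⟩ := hmem
        rw [hΦnot x hx] at hveq
        exact absurd (hveq ▸ v.2) hx
  exact ⟨collapseCongr Φ _ _ hiffM⟩
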